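/- If a set of n unit vectors in F^m has coherence μ < 1 attained by some pair, and the vectors span a proper subspace H of dimension m − k (with n ≥ m + k and k ≥ 1), then there exists a set of n unit vectors spanning all of F^m whose coherence is at most μ; hence the minimal coherence over spanning sets (frames) equals the minimal coherence over all n-tuples of unit vectors. -/

import Mathlib

open scoped InnerProductSpace

/-- The coherence of a family of vectors: the supremum of absolute pairwise inner products. -/
noncomputable def coherence (𝕜 : Type*) {E : Type*} [RCLike 𝕜] [NormedAddCommGroup E]
    [InnerProductSpace 𝕜 E] {n : ℕ} (φ : Fin n → E) : ℝ :=
  sSup {r : ℝ | ∃ j l : Fin n, j ≠ l ∧ r = ‖(⟪φ j, φ l⟫_𝕜 : 𝕜)‖}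

section Aux

variable {𝕜 E : Type*} [RCLike 𝕜] [NormedAddCommGroup E] [InnerProductSpace 𝕜 E] {n : ℕ}

lemma coherence_set_finite (ψ : Fin n → E) :
    {r : ℝ | ∃ j l : Fin n, j ≠ l ∧ r = ‖(⟪ψ j, ψ l⟫_𝕜 : 𝕜)‖}.Finite := by
  have h : {r : ℝ | ∃ j l : Fin n, j ≠ l ∧ r = ‖(⟪ψ j, ψ l⟫_𝕜 : 𝕜)‖} ⊆
      (fun p : Fin n × Fin n => ‖(⟪ψ p.1, ψ p.2⟫_𝕜 : 𝕜)‖) '' Set.univ := by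
    rintro r ⟨j, l, _, rfl⟩
    exact ⟨(j, l), trivial, rfl⟩
  exact (Set.finite_univ.image _).subset h

lemma norm_inner_le_coherence (ψ : Fin n → E) {j l : Fin n} (hjl : j ≠ l) :
    ‖(⟪ψ j, ψ l⟫_𝕜 : 𝕜)‖ ≤ coherence 𝕜 ψ :=
  le_csSup (coherence_set_finite ψ).bddAbove ⟨j, l, hjl, rfl⟩

lemma two_le_exists_ne (hn : 2 ≤ n) : ∃ j l : Fin n, j ≠ l := by
  refine ⟨⟨0, by omega⟩, ⟨1, by omega⟩, ?_⟩
  simp [Fin.ext_iff]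

lemma coherence_nonneg (hn : 2 ≤ n) (ψ : Fin n → E) : 0 ≤ coherence 𝕜 ψ := by
  obtain ⟨j, l, hjl⟩ := two_le_exists_ne hn
  calc (0:ℝ) ≤ ‖(⟪ψ j, ψ l⟫_𝕜 : 𝕜)‖ := norm_nonneg _
  _ ≤ coherence 𝕜 ψ := norm_inner_le_coherence ψ hjl

lemma coherence_le (hn : 2 ≤ n) (ψ : Fin n → E) {c : ℝ}
    (h : ∀ j l : Fin n, j ≠ l → ‖(⟪ψ j, ψ l⟫_𝕜 : 𝕜)‖ ≤ c) : coherence 𝕜 ψ ≤ c := by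
  obtain ⟨j, l, hjl⟩ := two_le_exists_ne hn
  refine csSup_le ⟨_, j, l, hjl, rfl⟩ ?_
  rintro r ⟨j', l', hjl', rfl⟩
  exact h j' l' hjl'

end Aux

set_option maxHeartbeats 1000000 in
lemma exists_frame_le {𝕜 E : Type*} [RCLike 𝕜] [NormedAddCommGroup E] [InnerProductSpace 𝕜 E]
    [FiniteDimensional 𝕜 E] {n : ℕ} (hn2 : 2 ≤ n) (hmn : Module.finrank 𝕜 E ≤ n)
    (ψ : Fin n → E) (hunit : ∀ j, ‖ψ j‖ = 1) :
    ∃ ψ' : Fin n → E, (∀ j, ‖ψ' j‖ = 1) ∧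
      Submodule.span 𝕜 (Set.range ψ') = ⊤ ∧ coherence 𝕜 ψ' ≤ coherence 𝕜 ψ := by
  classical
  by_cases hsp : Submodule.span 𝕜 (Set.range ψ) = ⊤
  · exact ⟨ψ, hunit, hsp, le_rfl⟩
  set H : Submodule 𝕜 E := Submodule.span 𝕜 (Set.range ψ) with hH
  obtain ⟨b, hbsub, hbspan, hbli⟩ := exists_linearIndependent 𝕜 (Set.range ψ)
  have hbfin : b.Finite := hbli.setFinite
  haveI : Fintype b := hbfin.fintype
  have hpre : ∀ x : b, ∃ i : Fin n, ψ i = (x : E) := fun x => hbsub x.2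
  choose f hf using hpre
  have hfinj : Function.Injective f := by
    intro x y hxy
    apply Subtype.ext
    rw [← hf x, ← hf y, hxy]
  set Jf : Finset (Fin n) := Finset.univ.image f with hJf
  have hJcard : Jf.card = Fintype.card b := by
    rw [hJf, Finset.card_image_of_injective _ hfinj, Finset.card_univ]
  have hdim : Module.finrank 𝕜 H + Module.finrank 𝕜 Hᗮ = Module.finrank 𝕜 E :=
    Submodule.finrank_add_finrank_orthogonal H
  have hcardb : Fintype.card b = Module.finrank 𝕜 H := by
    rw [hH, ← hbspan, finrank_span_set_eq_card hbli, Set.toFinset_card]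
  set c : ℕ := Module.finrank 𝕜 Hᗮ with hc
  have hcard2 : Fintype.card (Fin c) ≤ Fintype.card ↥(Jfᶜ) := by
    rw [Fintype.card_fin, Fintype.card_coe, Finset.card_compl, Fintype.card_fin, hJcard, hcardb]
    omega
  obtain ⟨g⟩ := Function.Embedding.nonempty_of_card_le hcard2
  set g' : Fin c → Fin n := fun a => (g a : Fin n) with hg'
  have hg'inj : Function.Injective g' := fun a a' h => g.injective (Subtype.ext h)
  have hg'notJ : ∀ a, g' a ∉ Jf := fun a => Finset.mem_compl.1 (g a).2
  set ob : OrthonormalBasis (Fin c) 𝕜 Hᗮ := stdOrthonormalBasis 𝕜 Hᗮ with hob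
  set ψ' : Fin n → E := fun j => if h : ∃ a, g' a = j then ((ob h.choose : Hᗮ) : E) else ψ j
    with hψ'
  have hψ'new : ∀ a, ψ' (g' a) = ((ob a : Hᗮ) : E) := by
    intro a
    have hex : ∃ a', g' a' = g' a := ⟨a, rfl⟩
    have : hex.choose = a := hg'inj hex.choose_spec
    simp only [hψ', dif_pos hex, this]
  have hψ'old : ∀ j, (¬ ∃ a, g' a = j) → ψ' j = ψ j := by
    intro j hj; simp only [hψ', dif_neg hj]
  refine ⟨ψ', ?_, ?_, ?_⟩
  · intro j
    by_cases hj : ∃ a, g' a = j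
    · obtain ⟨a, rfl⟩ := hj
      rw [hψ'new a]
      have := ob.orthonormal.1 a
      exact this
    · rw [hψ'old j hj]; exact hunit j
  · have hHle : H ≤ Submodule.span 𝕜 (Set.range ψ') := by
      rw [hH, ← hbspan]
      apply Submodule.span_le.2
      intro x hx
      have hJ : f ⟨x, hx⟩ ∈ Jf := Finset.mem_image_of_mem f (Finset.mem_univ _)
      have hnot : ¬ ∃ a, g' a = f ⟨x, hx⟩ := by
        rintro ⟨a, ha⟩
        exact hg'notJ a (ha ▸ hJ)
      have : ψ' (f ⟨x, hx⟩) = x := by rw [hψ'old _ hnot, hf]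
      exact Submodule.subset_span ⟨f ⟨x, hx⟩, this⟩
    have hOle : Hᗮ ≤ Submodule.span 𝕜 (Set.range ψ') := by
      have hspan2 : Submodule.span 𝕜 (Set.range fun a => ((ob a : Hᗮ) : E)) = Hᗮ := by
        have h1 : Submodule.span 𝕜 (Set.range ob) = (⊤ : Submodule 𝕜 Hᗮ) := ob.toBasis.span_eq
        have := congrArg (Submodule.map Hᗮ.subtype) h1
        rwa [Submodule.map_span, ← Set.range_comp, Submodule.map_subtype_top] at this
      rw [← hspan2]
      apply Submodule.span_le.2
      rintro x ⟨a, rfl⟩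
      exact Submodule.subset_span ⟨g' a, hψ'new a⟩
    rw [eq_top_iff, ← Submodule.sup_orthogonal_of_hasOrthogonalProjection (K := H)]
    exact sup_le hHle hOle
  · apply coherence_le hn2
    intro j l hjl
    have hmemH : ∀ i, (¬ ∃ a, g' a = i) → ψ' i ∈ H := by
      intro i hi
      rw [hψ'old i hi]
      exact Submodule.subset_span ⟨i, rfl⟩
    have hnn : (0:ℝ) ≤ coherence 𝕜 ψ := coherence_nonneg hn2 ψ
    by_cases hj : ∃ a, g' a = j <;> by_cases hl : ∃ a, g' a = l
    · obtain ⟨a, rfl⟩ := hj; obtain ⟨a', rfl⟩ := hl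
      have haa' : a ≠ a' := fun h => hjl (by rw [h])
      rw [hψ'new, hψ'new]
      have h0 : (⟪((ob a : Hᗮ) : E), ((ob a' : Hᗮ) : E)⟫_𝕜 : 𝕜) = 0 := by
        rw [← Submodule.coe_inner]
        exact ob.orthonormal.2 haa'
      rw [h0, norm_zero]
      exact hnn
    · obtain ⟨a, rfl⟩ := hj
      rw [hψ'new]
      have h0 : (⟪((ob a : Hᗮ) : E), ψ' l⟫_𝕜 : 𝕜) = 0 := by
        rw [inner_eq_zero_symm]
        exact (Submodule.mem_orthogonal H _).1 (ob a).2 _ (hmemH l hl)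
      rw [h0, norm_zero]
      exact hnn
    · obtain ⟨a, rfl⟩ := hl
      rw [hψ'new]
      have h0 : (⟪ψ' j, ((ob a : Hᗮ) : E)⟫_𝕜 : 𝕜) = 0 :=
        (Submodule.mem_orthogonal H _).1 (ob a).2 _ (hmemH j hj)
      rw [h0, norm_zero]
      exact hnn
    · rw [hψ'old j hj, hψ'old l hl]
      exact norm_inner_le_coherence ψ hjl

/-- Non-spanning minimally coherent configurations can be rearranged into frames with no
greater coherence; hence minimizing coherence over frames is the same as over all tuples of
unit vectors. -/
theorem rearrange_to_frame (𝕜 : Type*) [RCLike 𝕜] (m n k : ℕ) (hk : 1 ≤ k) (hkm : k < m)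
    (hn : m + k ≤ n) (μ : ℝ) (hμ : μ < 1)
    (φ : Fin n → EuclideanSpace 𝕜 (Fin m)) (hunit : ∀ j, ‖φ j‖ = 1)
    (hcoh : coherence 𝕜 φ = μ)
    (hatt : ∃ j l : Fin n, j ≠ l ∧ ‖(⟪φ j, φ l⟫_𝕜 : 𝕜)‖ = μ)
    (hspan : Module.finrank 𝕜 (Submodule.span 𝕜 (Set.range φ)) = m - k) :
    (∃ ψ : Fin n → EuclideanSpace 𝕜 (Fin m), (∀ j, ‖ψ j‖ = 1) ∧
      Submodule.span 𝕜 (Set.range ψ) = ⊤ ∧ coherence 𝕜 ψ ≤ μ) ∧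
    sInf {r : ℝ | ∃ ψ : Fin n → EuclideanSpace 𝕜 (Fin m), (∀ j, ‖ψ j‖ = 1) ∧
        Submodule.span 𝕜 (Set.range ψ) = ⊤ ∧ r = coherence 𝕜 ψ} =
      sInf {r : ℝ | ∃ ψ : Fin n → EuclideanSpace 𝕜 (Fin m), (∀ j, ‖ψ j‖ = 1) ∧
        r = coherence 𝕜 ψ} := by
  have hn2 : 2 ≤ n := by omega
  have hmn : Module.finrank 𝕜 (EuclideanSpace 𝕜 (Fin m)) ≤ n := by
    rw [finrank_euclideanSpace_fin]; omega
  obtain ⟨ψ₀, hψ₀u, hψ₀s, hψ₀c⟩ := exists_frame_le hn2 hmn φ hunit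
  constructor
  · exact ⟨ψ₀, hψ₀u, hψ₀s, hcoh ▸ hψ₀c⟩
  · set A := {r : ℝ | ∃ ψ : Fin n → EuclideanSpace 𝕜 (Fin m), (∀ j, ‖ψ j‖ = 1) ∧
        Submodule.span 𝕜 (Set.range ψ) = ⊤ ∧ r = coherence 𝕜 ψ} with hA
    set B := {r : ℝ | ∃ ψ : Fin n → EuclideanSpace 𝕜 (Fin m), (∀ j, ‖ψ j‖ = 1) ∧
        r = coherence 𝕜 ψ} with hB
    have hAB : A ⊆ B := by
      rintro r ⟨ψ, h1, _, h3⟩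
      exact ⟨ψ, h1, h3⟩
    have hAne : A.Nonempty := ⟨coherence 𝕜 ψ₀, ψ₀, hψ₀u, hψ₀s, rfl⟩
    have hBne : B.Nonempty := ⟨coherence 𝕜 φ, φ, hunit, rfl⟩
    have hBbdd : BddBelow B := by
      refine ⟨0, ?_⟩
      rintro r ⟨ψ, _, rfl⟩
      exact coherence_nonneg hn2 ψ
    have hAbdd : BddBelow A := hBbdd.mono hAB
    apply le_antisymm
    · refine le_csInf hBne ?_
      rintro r ⟨ψ, h1, rfl⟩
      obtain ⟨ψ', h1', h2', h3'⟩ := exists_frame_le hn2 hmn ψ h1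
      exact le_trans (csInf_le hAbdd ⟨ψ', h1', h2', rfl⟩) h3'
    · exact csInf_le_csInf hBbdd hAne hAB
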